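/- Let r0 > 0 and let u_ε : ℝ² → ℝ be defined by u_ε(x) = log(ε²/((ε² + ‖x‖²)²)) for ε > 0. There exists a constant C > 0 such that for every ε ∈ (0,1], |(π·r0²)⁻¹·∫_B u_ε(x) dx − log(ε²)| ≤ C. -/

import Mathlib

open Real
open MeasureTheory

/-- The Liouville bubble u_ε on ℝ². -/
noncomputable def bubble (ε : ℝ) (x : EuclideanSpace ℝ (Fin 2)) : ℝ :=
  Real.log (ε ^ 2 / (ε ^ 2 + ‖x‖ ^ 2) ^ 2)

lemma vol_ball2 (r : ℝ) (hr : 0 ≤ r) :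
    volume (Metric.ball (0 : EuclideanSpace ℝ (Fin 2)) r) = ENNReal.ofReal (π * r ^ 2) := by
  rw [EuclideanSpace.volume_ball]
  simp only [Fintype.card_fin]
  rw [show ((2 : ℕ) : ℝ) / 2 + 1 = 2 by norm_num, Real.Gamma_two,
    Real.sq_sqrt Real.pi_nonneg, ← ENNReal.ofReal_pow hr, ← ENNReal.ofReal_mul (by positivity)]
  ring_nf

/-- mean value expansion (1/|B|)∫_B u_ε = log ε² + O(1). -/
theorem stmt_11 (r0 : ℝ) (hr : 0 < r0) :
    ∃ C > 0, ∀ ε ∈ Set.Ioc (0:ℝ) 1,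
      |(π * r0 ^ 2)⁻¹ * (∫ x in Metric.ball (0 : EuclideanSpace ℝ (Fin 2)) r0, bubble ε x)
        - Real.log (ε ^ 2)| ≤ C := by
  set A : ℝ := π * r0 ^ 2 with hAdef
  have hA : 0 < A := by positivity
  set L : ℝ := Real.log (1 + r0 ^ 2) with hLdef
  have hL : 0 ≤ L := Real.log_nonneg (by nlinarith)
  refine ⟨2 * A⁻¹ * (L * A + π), by positivity, ?_⟩
  rintro ε ⟨hε0, hε1⟩
  set B : Set (EuclideanSpace ℝ (Fin 2)) := Metric.ball 0 r0 with hBdef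
  have hBmeas : MeasurableSet B := measurableSet_ball
  have hvol : volume B = ENNReal.ofReal A := vol_ball2 r0 hr.le
  have hvolR : (volume B).toReal = A := by rw [hvol]; exact ENNReal.toReal_ofReal hA.le
  set f : EuclideanSpace ℝ (Fin 2) → ℝ := fun x => Real.log (ε ^ 2 + ‖x‖ ^ 2) with hfdef
  have hpos : ∀ x : EuclideanSpace ℝ (Fin 2), 0 < ε ^ 2 + ‖x‖ ^ 2 := fun x => by positivity
  have hfc : Continuous f :=
    (continuous_const.add (continuous_norm.pow 2)).log fun x => (hpos x).ne'
  have hbub : ∀ x, bubble ε x = Real.log (ε ^ 2) - 2 * f x := by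
    intro x
    have hfx : f x = Real.log (ε ^ 2 + ‖x‖ ^ 2) := rfl
    unfold bubble
    rw [hfx, Real.log_div (by positivity) (by positivity),
      show Real.log ((ε ^ 2 + ‖x‖ ^ 2) ^ 2) = 2 * Real.log (ε ^ 2 + ‖x‖ ^ 2) by
        rw [Real.log_pow]; push_cast; ring]
  have hfint : IntegrableOn f B := by
    exact ((hfc.continuousOn).integrableOn_compact
      (isCompact_closedBall (0 : EuclideanSpace ℝ (Fin 2)) r0)).mono_set
      Metric.ball_subset_closedBall
  have hvol_lt : volume B < ⊤ := by rw [hvol]; exact ENNReal.ofReal_lt_top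
  set I : ℝ := ∫ x in B, f x with hIdef
  have h1 : ∫ x in B, bubble ε x = Real.log (ε ^ 2) * A - 2 * I := by
    calc ∫ x in B, bubble ε x = ∫ x in B, (Real.log (ε ^ 2) - 2 * f x) :=
          setIntegral_congr_fun hBmeas fun x _ => hbub x
      _ = (∫ _ in B, Real.log (ε ^ 2)) - ∫ x in B, 2 * f x :=
          integral_sub (integrableOn_const hvol_lt.ne) (hfint.const_mul 2)
      _ = Real.log (ε ^ 2) * A - 2 * I := by
          rw [setIntegral_const, integral_const_mul, smul_eq_mul, measureReal_def, hvolR]; ring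
  -- bound |I|
  set h : EuclideanSpace ℝ (Fin 2) → ℝ := fun x => max (-f x) 0 with hhdef
  have hhc : Continuous h := (hfc.neg).max continuous_const
  have hptwise : ∀ x ∈ B, ENNReal.ofReal ‖f x‖ ≤
      ENNReal.ofReal L + ENNReal.ofReal (h x) := by
    intro x hx
    have hxr : ‖x‖ < r0 := by simpa [hBdef, dist_eq_norm] using hx
    have hfle : f x ≤ L := by
      apply Real.log_le_log (hpos x)
      have : ε ^ 2 ≤ 1 := by nlinarith
      nlinarith [norm_nonneg x]
    have hnegle : -f x ≤ h x := le_max_left _ _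
    have hh0 : 0 ≤ h x := le_max_right _ _
    have habs : ‖f x‖ ≤ L + h x := by
      rw [Real.norm_eq_abs, abs_le]; constructor <;> nlinarith
    calc ENNReal.ofReal ‖f x‖ ≤ ENNReal.ofReal (L + h x) := ENNReal.ofReal_le_ofReal habs
      _ = ENNReal.ofReal L + ENNReal.ofReal (h x) := ENNReal.ofReal_add hL hh0
  -- layer cake bound on ∫⁻ ofReal (h x)
  have hlayer : ∫⁻ x in B, ENNReal.ofReal (h x) ≤ ENNReal.ofReal π := by
    have heq := lintegral_eq_lintegral_meas_lt (volume.restrict B) (f := h)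
      (ae_of_all _ fun x => le_max_right _ _) hhc.aemeasurable
    rw [heq]
    calc ∫⁻ t in Set.Ioi (0:ℝ), (volume.restrict B) {a | t < h a}
        ≤ ∫⁻ t in Set.Ioi (0:ℝ), ENNReal.ofReal (π * Real.exp (-t)) := by
          apply setLIntegral_mono' measurableSet_Ioi
          intro t ht
          have ht : (0:ℝ) < t := ht
          have hsub : {a : EuclideanSpace ℝ (Fin 2) | t < h a} ⊆
              Metric.ball 0 (Real.exp (-t / 2)) := by
            intro a ha
            have ha' : t < h a := ha
            have hfa : f a < -t := by
              have ha'' : t < max (-f a) 0 := ha'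
              rcases lt_max_iff.mp ha'' with hc | hc <;> linarith
            have h2 : ε ^ 2 + ‖a‖ ^ 2 < Real.exp (-t) :=
              (Real.log_lt_iff_lt_exp (hpos a)).mp hfa
            have h3 : ‖a‖ ^ 2 < Real.exp (-t / 2) ^ 2 := by
              rw [← Real.exp_nat_mul]
              have : ((2:ℕ):ℝ) * (-t / 2) = -t := by push_cast; ring
              rw [this]
              nlinarith [sq_nonneg ε]
            have h4 : ‖a‖ < Real.exp (-t / 2) := by
              nlinarith [norm_nonneg a, Real.exp_pos (-t / 2)]
            simpa [dist_eq_norm] using h4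
          calc (volume.restrict B) {a | t < h a} ≤ volume {a | t < h a} :=
                Measure.restrict_le_self _
            _ ≤ volume (Metric.ball (0 : EuclideanSpace ℝ (Fin 2)) (Real.exp (-t / 2))) :=
                measure_mono hsub
            _ = ENNReal.ofReal (π * Real.exp (-t / 2) ^ 2) :=
                vol_ball2 _ (Real.exp_pos _).le
            _ = ENNReal.ofReal (π * Real.exp (-t)) := by
                rw [← Real.exp_nat_mul]
                congr 2
                push_cast; ring
      _ = ENNReal.ofReal π := by
          have hint : IntegrableOn (fun t : ℝ => π * Real.exp (-t)) (Set.Ioi 0) :=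
            ((exp_neg_integrableOn_Ioi 0 one_pos).congr_fun
              (fun x _ => by norm_num) measurableSet_Ioi).const_mul π
          rw [← ofReal_integral_eq_lintegral_ofReal hint (ae_of_all _ fun t => by positivity),
            integral_const_mul, integral_exp_neg_Ioi_zero, mul_one]
  have hIbound : |I| ≤ L * A + π := by
    have h0 : ‖I‖ ≤ (∫⁻ x in B, ENNReal.ofReal ‖f x‖).toReal :=
      norm_integral_le_lintegral_norm f
    have h2 : ∫⁻ x in B, ENNReal.ofReal ‖f x‖ ≤ ENNReal.ofReal (L * A + π) := by
      calc ∫⁻ x in B, ENNReal.ofReal ‖f x‖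
          ≤ ∫⁻ x in B, (ENNReal.ofReal L + ENNReal.ofReal (h x)) :=
            setLIntegral_mono' hBmeas hptwise
        _ = ENNReal.ofReal L * volume B + ∫⁻ x in B, ENNReal.ofReal (h x) := by
            rw [lintegral_add_left measurable_const, setLIntegral_const]
        _ ≤ ENNReal.ofReal L * ENNReal.ofReal A + ENNReal.ofReal π := by
            rw [hvol]; exact add_le_add_right hlayer _
        _ = ENNReal.ofReal (L * A + π) := by
            rw [← ENNReal.ofReal_mul hL, ← ENNReal.ofReal_add (by positivity) Real.pi_nonneg]
    rw [Real.norm_eq_abs] at h0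
    refine h0.trans ?_
    exact ENNReal.toReal_le_of_le_ofReal (by positivity) h2
  -- conclude
  have hkey : (π * r0 ^ 2)⁻¹ * (∫ x in B, bubble ε x) - Real.log (ε ^ 2)
      = -2 * A⁻¹ * I := by
    rw [h1, ← hAdef]
    field_simp
    ring
  rw [hkey, abs_mul]
  have habs2 : |(-2 : ℝ) * A⁻¹| = 2 * A⁻¹ := by
    rw [abs_mul, abs_neg, abs_two, abs_of_nonneg (by positivity : (0:ℝ) ≤ A⁻¹)]
  rw [habs2]
  exact mul_le_mul_of_nonneg_left hIbound (by positivity)
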